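/- Splitter composition recovers the disjointness matrix: Suppose P is an (n,k,u)-splitter family with the additional property that for every S ⊆ [n] of size ≤ k there is π ∈ P injective on S, and 𝒮 is a family of functions σ : [u] → [s] such that for every T ⊆ [u] of size ≤ k there is σ ∈ 𝒮 with |σ^{-1}(i) ∩ T| ≤ s for all i ∈ [s], where k = s². Then over any additively idempotent semiring, H · (I ⊗ D_{u,s}^{⊗ s}) · H^T = D_{n,k}, i.e., for all A, B ⊆ [n], Σ_{(π,σ)} [π injective on A]·[π injective on B]·∏_{i=1}^{s} D_{u,s}[σ^{-1}(i) ∩ π(A), σ^{-1}(i) ∩ π(B)] = D_{n,k}[A,B]. -/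

import Mathlib

open Finset

private lemma sum01 {S : Type*} [Semiring S] (hid : ∀ x : S, x + x = x)
    {α : Type*} (F : Finset α) (f : α → S)
    (h : ∀ x ∈ F, f x = 0 ∨ f x = 1) : ∑ x ∈ F, f x = 0 ∨ ∑ x ∈ F, f x = 1 := by
  induction F using Finset.cons_induction with
  | empty => simp
  | cons a F ha ih =>
    rw [Finset.sum_cons]
    rcases h a (Finset.mem_cons_self a F) with h0 | h1
    · rw [h0, zero_add]; exact ih fun x hx => h x (Finset.mem_cons_of_mem hx)
    · rcases ih (fun x hx => h x (Finset.mem_cons_of_mem hx)) with hs | hs <;>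
        rw [h1, hs]
      · right; exact add_zero 1
      · right; exact hid 1

private lemma sum_one {S : Type*} [Semiring S] (hid : ∀ x : S, x + x = x)
    {α : Type*} (F : Finset α) (f : α → S)
    (h : ∀ x ∈ F, f x = 0 ∨ f x = 1) (hex : ∃ x ∈ F, f x = 1) :
    ∑ x ∈ F, f x = 1 := by
  induction F using Finset.cons_induction with
  | empty => simp at hex
  | cons a F ha ih =>
    rw [Finset.sum_cons]
    obtain ⟨x, hx, hfx⟩ := hex
    rcases Finset.mem_cons.mp hx with rfl | hxF
    · rw [hfx]
      rcases sum01 hid F f (fun y hy => h y (Finset.mem_cons_of_mem hy)) with hs | hs <;>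
        rw [hs]
      · exact add_zero 1
      · exact hid 1
    · rw [ih (fun y hy => h y (Finset.mem_cons_of_mem hy)) ⟨x, hxF, hfx⟩]
      rcases h a (Finset.mem_cons_self a F) with h0 | h1
      · rw [h0, zero_add]
      · rw [h1]; exact hid 1

private lemma listprod01 {S : Type*} [Semiring S] (l : List S)
    (h : ∀ x ∈ l, x = 0 ∨ x = 1) : l.prod = 0 ∨ l.prod = 1 := by
  induction l with
  | nil => right; rfl
  | cons a t ih =>
    rw [List.prod_cons]
    rcases h a (List.mem_cons_self (a := a) (l := t)) with h0 | h1
    · left; rw [h0, zero_mul]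
    · rcases ih (fun x hx => h x (List.mem_cons_of_mem a hx)) with hs | hs <;>
        rw [h1, hs, one_mul]
      · exact Or.inl rfl
      · exact Or.inr rfl

theorem stmt16 {S : Type*} [Semiring S] (hid : ∀ x : S, x + x = x)
    {n u s k : ℕ} (hk : k = s ^ 2)
    (P : Finset (Fin n → Fin u)) (𝒮 : Finset (Fin u → Fin s))
    (hP : ∀ A : Finset (Fin n), A.card ≤ k →
      ∃ π ∈ P, ∀ a ∈ A, ∀ b ∈ A, π a = π b → a = b)
    (h𝒮 : ∀ T : Finset (Fin u), T.card ≤ k →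
      ∃ σ ∈ 𝒮, ∀ i : Fin s, (T.filter (fun v => σ v = i)).card ≤ s)
    (A B : Finset (Fin n)) :
    (∑ π ∈ P, ∑ σ ∈ 𝒮,
      (if ∀ a ∈ A, ∀ b ∈ A, π a = π b → a = b then (1 : S) else 0) *
      (if ∀ a ∈ B, ∀ b ∈ B, π a = π b → a = b then (1 : S) else 0) *
      ((List.finRange s).map (fun i =>
        if Disjoint ((A.image π).filter (fun v => σ v = i))
              ((B.image π).filter (fun v => σ v = i)) ∧
            (((A.image π).filter (fun v => σ v = i)) ∪
              ((B.image π).filter (fun v => σ v = i))).card ≤ s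
         then (1 : S) else 0)).prod)
    = (if Disjoint A B ∧ (A ∪ B).card ≤ k then (1 : S) else 0) := by
  by_cases hcond : Disjoint A B ∧ (A ∪ B).card ≤ k
  · rw [if_pos hcond, ← Finset.sum_product']
    obtain ⟨hAB, hcard⟩ := hcond
    obtain ⟨π, hπP, hπinj⟩ := hP (A ∪ B) hcard
    have hTcard : ((A ∪ B).image π).card ≤ k :=
      le_trans (Finset.card_image_le) hcard
    obtain ⟨σ, hσS, hσ⟩ := h𝒮 ((A ∪ B).image π) hTcard
    apply sum_one hid
    · -- every term is 0 or 1
      rintro ⟨π', σ'⟩ _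
      have hl := listprod01 ((List.finRange s).map (fun i =>
        if Disjoint ((A.image π').filter (fun v => σ' v = i))
              ((B.image π').filter (fun v => σ' v = i)) ∧
            (((A.image π').filter (fun v => σ' v = i)) ∪
              ((B.image π').filter (fun v => σ' v = i))).card ≤ s
         then (1 : S) else 0))
        (by
          intro x hx
          obtain ⟨i, _, rfl⟩ := List.mem_map.mp hx
          split <;> simp)
      rcases hl with hl | hl <;> split_ifs <;> simp [hl]
    · refine ⟨(π, σ), Finset.mem_product.mpr ⟨hπP, hσS⟩, ?_⟩
      have hinjA : ∀ a ∈ A, ∀ b ∈ A, π a = π b → a = b := fun a ha b hb =>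
        hπinj a (Finset.mem_union_left _ ha) b (Finset.mem_union_left _ hb)
      have hinjB : ∀ a ∈ B, ∀ b ∈ B, π a = π b → a = b := fun a ha b hb =>
        hπinj a (Finset.mem_union_right _ ha) b (Finset.mem_union_right _ hb)
      rw [if_pos hinjA, if_pos hinjB, one_mul, one_mul]
      apply List.prod_eq_one
      intro x hx
      obtain ⟨i, _, rfl⟩ := List.mem_map.mp hx
      dsimp only
      rw [if_pos]
      constructor
      · rw [Finset.disjoint_left]
        rintro v hvA hvB
        obtain ⟨a, ha, rfl⟩ := Finset.mem_image.mp (Finset.mem_filter.mp hvA).1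
        obtain ⟨b, hb, hba⟩ := Finset.mem_image.mp (Finset.mem_filter.mp hvB).1
        have : b = a := hπinj b (Finset.mem_union_right _ hb) a (Finset.mem_union_left _ ha) hba
        exact Finset.disjoint_left.mp hAB ha (this ▸ hb)
      · have heq : ((A.image π).filter (fun v => σ v = i)) ∪
            ((B.image π).filter (fun v => σ v = i)) =
            ((A ∪ B).image π).filter (fun v => σ v = i) := by
          rw [Finset.image_union, Finset.filter_union]
        rw [heq]
        exact hσ i
  · rw [if_neg hcond]
    apply Finset.sum_eq_zero
    intro π _
    apply Finset.sum_eq_zero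
    intro σ _
    by_cases hd : Disjoint A B
    · -- then card (A ∪ B) > k
      have hcard : k < (A ∪ B).card := by
        push_neg at hcond
        exact hcond hd
      by_cases hinjA : ∀ a ∈ A, ∀ b ∈ A, π a = π b → a = b
      · by_cases hinjB : ∀ a ∈ B, ∀ b ∈ B, π a = π b → a = b
        · rw [if_pos hinjA, if_pos hinjB, one_mul, one_mul]
          by_cases hdi : Disjoint (A.image π) (B.image π)
          · have hinjU : Set.InjOn π ↑(A ∪ B) := by
              intro a ha b hb hab
              simp only [Finset.coe_union, Set.mem_union, Finset.mem_coe] at ha hb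
              rcases ha with ha | ha <;> rcases hb with hb | hb
              · exact hinjA a ha b hb hab
              · exfalso
                exact Finset.disjoint_left.mp hdi (Finset.mem_image_of_mem π ha)
                  (by rw [hab]; exact Finset.mem_image_of_mem π hb)
              · exfalso
                exact Finset.disjoint_left.mp hdi (Finset.mem_image_of_mem π hb)
                  (by rw [← hab]; exact Finset.mem_image_of_mem π ha)
              · exact hinjB a ha b hb hab
            have hcardim : ((A ∪ B).image π).card = (A ∪ B).card :=
              Finset.card_image_of_injOn hinjU
            have hex : ∃ i : Fin s, ¬ (Disjoint ((A.image π).filter (fun v => σ v = i))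
                  ((B.image π).filter (fun v => σ v = i)) ∧
                (((A.image π).filter (fun v => σ v = i)) ∪
                  ((B.image π).filter (fun v => σ v = i))).card ≤ s) := by
              by_contra hall
              push_neg at hall
              have hle : ((A ∪ B).image π).card ≤ s * s := by
                rw [Finset.card_eq_sum_card_fiberwise
                  (f := σ) (t := Finset.univ) (fun x _ => Finset.mem_univ _)]
                calc ∑ i ∈ Finset.univ, (((A ∪ B).image π).filter (fun v => σ v = i)).card
                    ≤ ∑ _i ∈ (Finset.univ : Finset (Fin s)), s := by
                      apply Finset.sum_le_sum
                      intro i _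
                      have heq : ((A ∪ B).image π).filter (fun v => σ v = i) =
                          ((A.image π).filter (fun v => σ v = i)) ∪
                          ((B.image π).filter (fun v => σ v = i)) := by
                        rw [Finset.image_union, Finset.filter_union]
                      rw [heq]
                      exact (hall i).2
                  _ = s * s := by simp [mul_comm]
              rw [hcardim] at hle
              have : (A ∪ B).card ≤ k := by rw [hk, pow_two]; exact hle
              omega
            obtain ⟨i, hi⟩ := hex
            rw [List.prod_eq_zero]
            exact List.mem_map.mpr ⟨i, List.mem_finRange i, by rw [if_neg hi]⟩
          · obtain ⟨v, hvA, hvB⟩ := Finset.not_disjoint_iff.mp hdi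
            rw [List.prod_eq_zero]
            refine List.mem_map.mpr ⟨σ v, List.mem_finRange _, ?_⟩
            rw [if_neg]
            rintro ⟨hdisj, -⟩
            exact Finset.disjoint_left.mp hdisj
              (Finset.mem_filter.mpr ⟨hvA, rfl⟩) (Finset.mem_filter.mpr ⟨hvB, rfl⟩)
        · rw [if_neg hinjB, mul_zero, zero_mul]
      · rw [if_neg hinjA, zero_mul, zero_mul]
    · obtain ⟨x, hxA, hxB⟩ := Finset.not_disjoint_iff.mp hd
      rw [List.prod_eq_zero, mul_zero]
      refine List.mem_map.mpr ⟨σ (π x), List.mem_finRange _, ?_⟩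
      rw [if_neg]
      rintro ⟨hdisj, -⟩
      exact Finset.disjoint_left.mp hdisj
        (Finset.mem_filter.mpr ⟨Finset.mem_image_of_mem π hxA, rfl⟩)
        (Finset.mem_filter.mpr ⟨Finset.mem_image_of_mem π hxB, rfl⟩)
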